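/- For n ≥ 1, e(n) = e(n−1) + p(n−1), where e(n) is the total number of removable cells over all partitions of n and p(n) is the number of partitions of n. -/

import Mathlib

/-- `Covers ν μ` means the Young diagram of `μ` is obtained from that of `ν` by
adding a single cell: one part of size `k` of `ν` (with `k = 0` meaning a new row)
is replaced by a part of size `k + 1`. -/
def Covers {n : ℕ} (ν : Nat.Partition n) (μ : Nat.Partition (n + 1)) : Prop :=
  ∃ k, μ.parts = (k + 1) ::ₘ ν.parts.erase k

/-- `e n` : the total number of removable (extreme) cells over all partitions of `n`,
where the number of removable cells of a partition is its number of distinct part sizes. -/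
def e (n : ℕ) : ℕ := ∑ l : Nat.Partition n, l.parts.toFinset.card

/-- Remove a cell from a part of size `k` of `μ`. -/
def remCell {m : ℕ} (μ : Nat.Partition (m + 1)) (k : ℕ) : Nat.Partition m :=
  if h : k ∈ μ.parts ∧ 2 ≤ k then
    { parts := (k - 1) ::ₘ μ.parts.erase k
      parts_pos := by
        intro i hi
        rcases Multiset.mem_cons.mp hi with rfl | hi
        · omega
        · exact μ.parts_pos (Multiset.mem_of_mem_erase hi)
      parts_sum := by
        have h2 := μ.parts_sum
        have h3 : μ.parts = k ::ₘ μ.parts.erase k := (Multiset.cons_erase h.1).symm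
        rw [h3, Multiset.sum_cons] at h2
        rw [Multiset.sum_cons]
        omega }
  else if h1 : 1 ∈ μ.parts then
    { parts := μ.parts.erase 1
      parts_pos := fun hi => μ.parts_pos (Multiset.mem_of_mem_erase hi)
      parts_sum := by
        have h2 := μ.parts_sum
        have h3 : μ.parts = 1 ::ₘ μ.parts.erase 1 := (Multiset.cons_erase h1).symm
        rw [h3, Multiset.sum_cons] at h2
        omega }
  else Nat.Partition.indiscrete m

/-- Add a cell to a part of size `j` of `ν` (new row of size 1 if `j ∉ ν.parts`). -/
def addCell {m : ℕ} (ν : Nat.Partition m) (j : ℕ) : Nat.Partition (m + 1) :=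
  if h : j ∈ ν.parts then
    { parts := (j + 1) ::ₘ ν.parts.erase j
      parts_pos := by
        intro i hi
        rcases Multiset.mem_cons.mp hi with rfl | hi
        · omega
        · exact ν.parts_pos (Multiset.mem_of_mem_erase hi)
      parts_sum := by
        have h2 := ν.parts_sum
        have h3 : ν.parts = j ::ₘ ν.parts.erase j := (Multiset.cons_erase h).symm
        rw [h3, Multiset.sum_cons] at h2
        rw [Multiset.sum_cons]
        omega }
  else
    { parts := 1 ::ₘ ν.parts
      parts_pos := by
        intro i hi
        rcases Multiset.mem_cons.mp hi with rfl | hi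
        · omega
        · exact ν.parts_pos hi
      parts_sum := by rw [Multiset.sum_cons, ν.parts_sum]; omega }

/-- For `n ≥ 1`, `e n = e (n - 1) + p (n - 1)`, where `p` is the partition counting
function. -/
theorem e_recursion (n : ℕ) (hn : 1 ≤ n) :
    e n = e (n - 1) + Fintype.card (Nat.Partition (n - 1)) := by
  classical
  obtain ⟨m, rfl⟩ : ∃ m, n = m + 1 := ⟨n - 1, by omega⟩
  simp only [Nat.add_sub_cancel]
  have zero_not_mem : ∀ (ν : Nat.Partition m), 0 ∉ ν.parts := by
    intro ν h
    exact absurd (ν.parts_pos h) (by omega)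
  have key : (Finset.univ.sigma (fun μ : Nat.Partition (m + 1) => μ.parts.toFinset)).card
      = (Finset.univ.sigma (fun ν : Nat.Partition m => insert 0 ν.parts.toFinset)).card := by
    apply Finset.card_nbij' (fun p => ⟨remCell p.1 p.2, p.2 - 1⟩)
      (fun q => ⟨addCell q.1 q.2, q.2 + 1⟩)
    · rintro ⟨μ, k⟩ hp
      simp only [Finset.mem_coe, Finset.mem_sigma, Finset.mem_univ, true_and, Multiset.mem_toFinset] at hp ⊢
      have hk1 : 1 ≤ k := μ.parts_pos hp
      by_cases hk2 : 2 ≤ k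
      · rw [Finset.mem_insert, Multiset.mem_toFinset]
        right
        rw [remCell, dif_pos ⟨hp, hk2⟩]
        exact Multiset.mem_cons_self _ _
      · have : k = 1 := by omega
        subst this
        simp
    · rintro ⟨ν, j⟩ hq
      simp only [Finset.mem_coe, Finset.mem_sigma, Finset.mem_univ, true_and, Finset.mem_insert,
        Multiset.mem_toFinset] at hq ⊢
      rcases hq with rfl | hj
      · rw [addCell, dif_neg (zero_not_mem ν)]
        exact Multiset.mem_cons_self _ _
      · rw [addCell, dif_pos hj]
        exact Multiset.mem_cons_self _ _
    · rintro ⟨μ, k⟩ hp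
      simp only [Finset.mem_coe, Finset.mem_sigma, Finset.mem_univ, true_and, Multiset.mem_toFinset] at hp
      have hk1 : 1 ≤ k := μ.parts_pos hp
      dsimp only
      by_cases hk2 : 2 ≤ k
      · have hrem : (remCell μ k).parts = (k - 1) ::ₘ μ.parts.erase k := by
          rw [remCell, dif_pos ⟨hp, hk2⟩]
        have hmem : k - 1 ∈ (remCell μ k).parts := by
          rw [hrem]; exact Multiset.mem_cons_self _ _
        have hps : (addCell (remCell μ k) (k - 1)).parts = μ.parts := by
          rw [addCell, dif_pos hmem]
          dsimp only
          rw [hrem, Multiset.erase_cons_head]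
          have : k - 1 + 1 = k := by omega
          rw [this, Multiset.cons_erase hp]
        have h1 : addCell (remCell μ k) (k - 1) = μ := Nat.Partition.ext hps
        have h2 : k - 1 + 1 = k := by omega
        rw [h1, h2]
      · have : k = 1 := by omega
        subst this
        have hrem : (remCell μ 1).parts = μ.parts.erase 1 := by
          rw [remCell, dif_neg (by omega), dif_pos hp]
        have hnm : (0 : ℕ) ∉ (remCell μ 1).parts := by
          intro h
          exact absurd ((remCell μ 1).parts_pos h) (by omega)
        have hps : (addCell (remCell μ 1) 0).parts = μ.parts := by
          rw [addCell, dif_neg hnm]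
          dsimp only
          rw [hrem, Multiset.cons_erase hp]
        have h1 : addCell (remCell μ 1) 0 = μ := Nat.Partition.ext hps
        rw [h1]
    · rintro ⟨ν, j⟩ hq
      simp only [Finset.mem_coe, Finset.mem_sigma, Finset.mem_univ, true_and, Finset.mem_insert,
        Multiset.mem_toFinset] at hq
      dsimp only
      rcases hq with rfl | hj
      · have hadd : (addCell ν 0).parts = 1 ::ₘ ν.parts := by
          rw [addCell, dif_neg (zero_not_mem ν)]
        have hmem : 1 ∈ (addCell ν 0).parts := by
          rw [hadd]; exact Multiset.mem_cons_self _ _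
        have hps : (remCell (addCell ν 0) 1).parts = ν.parts := by
          rw [remCell, dif_neg (by omega), dif_pos hmem]
          dsimp only
          rw [hadd, Multiset.erase_cons_head]
        have h1 : remCell (addCell ν 0) 1 = ν := Nat.Partition.ext hps
        rw [h1]
      · have hj1 : 1 ≤ j := ν.parts_pos hj
        have hadd : (addCell ν j).parts = (j + 1) ::ₘ ν.parts.erase j := by
          rw [addCell, dif_pos hj]
        have hmem : j + 1 ∈ (addCell ν j).parts := by
          rw [hadd]; exact Multiset.mem_cons_self _ _
        have hps : (remCell (addCell ν j) (j + 1)).parts = ν.parts := by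
          rw [remCell, dif_pos ⟨hmem, by omega⟩]
          dsimp only
          rw [hadd, Multiset.erase_cons_head]
          simp only [Nat.add_sub_cancel]
          rw [Multiset.cons_erase hj]
        have h1 : remCell (addCell ν j) (j + 1) = ν := Nat.Partition.ext hps
        rw [h1]
        simp only [Nat.add_sub_cancel]
  rw [Finset.card_sigma, Finset.card_sigma] at key
  calc e (m + 1) = ∑ μ : Nat.Partition (m + 1), μ.parts.toFinset.card := rfl
    _ = ∑ ν : Nat.Partition m, (insert 0 ν.parts.toFinset).card := key
    _ = ∑ ν : Nat.Partition m, (ν.parts.toFinset.card + 1) := by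
        refine Finset.sum_congr rfl fun ν _ => ?_
        rw [Finset.card_insert_of_notMem (by simp [zero_not_mem ν])]
    _ = e m + Fintype.card (Nat.Partition m) := by
        rw [Finset.sum_add_distrib, e, Finset.sum_const, smul_eq_mul, mul_one,
          Fintype.card]
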